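/- The ideal 𝒫 is a prime ideal of B[X_i : i ∈ ℤ]; equivalently, the quotient ring B[X_i : i ∈ ℤ]/𝒫 is an integral domain. -/

import Mathlib

set_option linter.unusedSectionVars false


/-- The ideal generated by the elements `X i ^ q + Θ * X i - X (i-1)` (i ∈ ℤ) in the
polynomial ring over an integral domain `B` in the variables `X i`, `i ∈ ℤ`. -/
noncomputable def carlitzIdeal (B : Type*) [CommRing B] (q : ℕ) (Θ : B) : Ideal (MvPolynomial ℤ B) :=
  Ideal.span (Set.range fun i : ℤ =>
    MvPolynomial.X i ^ q + MvPolynomial.C Θ * MvPolynomial.X i - MvPolynomial.X (i - 1))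

namespace CarlitzAux

open Polynomial

variable {B : Type*} [CommRing B] [IsDomain B] (q : ℕ) (Θ : B)

/-- The Carlitz polynomial `g(X) = X^q + Θ X`. -/
noncomputable def gp : B[X] := X ^ q + C Θ * X

/-- Iterates of `g` under composition. -/
noncomputable def gpIter : ℕ → B[X]
  | 0 => X
  | n + 1 => (gp q Θ).comp (gpIter n)

lemma natDegree_gp_pos (hq : 2 ≤ q) : 0 < (gp q Θ).natDegree := by
  have hcoeff : (gp q Θ).coeff q = 1 := by
    rw [gp, coeff_add, coeff_X_pow, if_pos rfl, coeff_C_mul, coeff_X,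
      if_neg (by omega : ¬ (1 = q)), mul_zero, add_zero]
  have := le_natDegree_of_ne_zero (n := q) (p := gp q Θ) (by rw [hcoeff]; exact one_ne_zero)
  omega

lemma natDegree_gpIter_pos (hq : 2 ≤ q) : ∀ n, 0 < (gpIter q Θ n).natDegree
  | 0 => by simp [gpIter]
  | n + 1 => by
      have h1 := natDegree_gp_pos q Θ hq
      have h2 := natDegree_gpIter_pos hq n
      rw [gpIter, natDegree_comp]
      exact Nat.mul_pos h1 h2

lemma gpIter_add (m n : ℕ) :
    gpIter q Θ (m + n) = (gpIter q Θ m).comp (gpIter q Θ n) := by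
  induction m with
  | zero => simp [gpIter, X_comp]
  | succ m ih =>
      have : m + 1 + n = (m + n) + 1 := by omega
      rw [this, gpIter, ih, gpIter, comp_assoc]

/-- The transition ring homomorphisms of the directed system. -/
noncomputable def F (i j : ℤ) (_ : i ≤ j) : B[X] →+* B[X] :=
  eval₂RingHom Polynomial.C (gpIter q Θ (j - i).toNat)

lemma F_apply (i j : ℤ) (h : i ≤ j) (p : B[X]) :
    F q Θ i j h p = p.comp (gpIter q Θ (j - i).toNat) := rfl

instance directedSystem :
    DirectedSystem (fun _ : ℤ => B[X]) (fun i j h => F q Θ i j h) := by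
  constructor
  · intro i x
    have : (i - i).toNat = 0 := by omega
    simp only [F_apply, this, gpIter, comp_X]
  · intro k j i hij hjk x
    have hsum : (k - i).toNat = (j - i).toNat + (k - j).toNat := by omega
    simp only [F_apply, hsum, gpIter_add, comp_assoc]

/-- The direct limit of copies of `B[X]` along the transitions `F`. -/
noncomputable abbrev L : Type _ :=
  Ring.DirectLimit (fun _ : ℤ => B[X]) (fun i j h => F q Θ i j h)

/-- The canonical map from the `i`-th copy of `B[X]` to the limit. -/
noncomputable def lof (i : ℤ) : B[X] →+* L q Θ :=
  Ring.DirectLimit.of (fun _ : ℤ => B[X]) (fun i j h => F q Θ i j h) i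

lemma lof_f {i j : ℤ} (h : i ≤ j) (x : B[X]) :
    lof q Θ j (F q Θ i j h x) = lof q Θ i x :=
  Ring.DirectLimit.of_f (G := fun _ : ℤ => B[X]) (f := fun i j h => F q Θ i j h) h x

lemma lof_C (i j : ℤ) (b : B) : lof q Θ i (C b) = lof q Θ j (C b) := by
  have key : ∀ i j : ℤ, i ≤ j → lof q Θ i (C b) = lof q Θ j (C b) := by
    intro i j h
    have := lof_f q Θ h (C b : B[X])
    rw [F_apply, C_comp] at this
    exact this.symm
  rcases le_total i j with h | h
  · exact key i j h
  · exact (key j i h).symm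

/-- The map from the multivariate polynomial ring to the direct limit. -/
noncomputable def φ : MvPolynomial ℤ B →+* L q Θ :=
  MvPolynomial.eval₂Hom ((lof q Θ 0).comp Polynomial.C) fun i => lof q Θ i X

lemma φ_X (i : ℤ) : φ q Θ (MvPolynomial.X i) = lof q Θ i X := by
  simp [φ]

lemma φ_C (b : B) : φ q Θ (MvPolynomial.C b) = lof q Θ 0 (C b) := by
  simp [φ]

lemma span_le_ker : carlitzIdeal B q Θ ≤ RingHom.ker (φ q Θ) := by
  rw [carlitzIdeal, Ideal.span_le]
  rintro _ ⟨i, rfl⟩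
  rw [SetLike.mem_coe, RingHom.mem_ker, map_sub, map_add, map_mul, map_pow, φ_X, φ_X, φ_C]
  have h1 : (i - 1 : ℤ) ≤ i := by omega
  have hX : lof q Θ (i - 1) X = lof q Θ i (gp q Θ) := by
    have := lof_f q Θ h1 (X : B[X])
    rw [F_apply, X_comp] at this
    have ht : (i - (i - 1)).toNat = 1 := by omega
    rw [ht] at this
    rw [← this]
    congr 1
    simp [gpIter, comp_X]
  rw [hX, lof_C q Θ 0 i]
  rw [← map_pow, ← map_mul, ← map_add]
  simp [gp, sub_eq_zero]

/-- Elimination homomorphism sending `X i` (for `i ≤ j`) to `g^{(j-i)}(X)`. -/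
noncomputable def σ (j : ℤ) : MvPolynomial ℤ B →+* B[X] :=
  MvPolynomial.eval₂Hom Polynomial.C
    (fun i => if i ≤ j then gpIter q Θ (j - i).toNat else 0)

/-- The inclusion `B[X] → B[Xᵢ : i ∈ ℤ]` sending `X` to `X j`. -/
noncomputable def emb (j : ℤ) : B[X] →+* MvPolynomial ℤ B :=
  eval₂RingHom MvPolynomial.C (MvPolynomial.X j)

lemma φ_ι (j : ℤ) : (φ q Θ).comp (emb j) = lof q Θ j := by
  apply Polynomial.ringHom_ext
  · intro a
    rw [RingHom.comp_apply]
    have : emb j (C a) = MvPolynomial.C a := by simp [emb]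
    rw [this, φ_C, lof_C q Θ 0 j]
  · rw [RingHom.comp_apply]
    have : emb j (X : B[X]) = MvPolynomial.X j := by simp [emb]
    rw [this, φ_X]

lemma mk_ι_gpIter (j : ℤ) (n : ℕ) :
    Ideal.Quotient.mk (carlitzIdeal B q Θ) (MvPolynomial.X (j - n))
      = Ideal.Quotient.mk (carlitzIdeal B q Θ) (emb j (gpIter q Θ n)) := by
  induction n with
  | zero => simp [emb, gpIter]
  | succ n ih =>
      have hcomp : emb j (gpIter q Θ (n + 1))
          = (emb j (gpIter q Θ n)) ^ q + MvPolynomial.C Θ * emb j (gpIter q Θ n) := by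
        show eval₂ MvPolynomial.C (MvPolynomial.X j) ((gp q Θ).comp (gpIter q Θ n)) = _
        rw [eval₂_comp]
        simp [gp, eval₂_add, eval₂_mul, eval₂_pow]
        rfl
      rw [hcomp, map_add, map_mul, map_pow, ← ih]
      have hgen : MvPolynomial.X (j - n) ^ q + MvPolynomial.C Θ * MvPolynomial.X (j - n)
          - MvPolynomial.X ((j - n) - 1) ∈ carlitzIdeal B q Θ :=
        Ideal.subset_span ⟨j - n, rfl⟩
      have hmk := (Ideal.Quotient.eq_zero_iff_mem).2 hgen
      rw [map_sub, map_add, map_mul, map_pow, sub_eq_zero] at hmk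
      rw [Nat.cast_add, Nat.cast_one, ← sub_sub]
      exact hmk.symm

lemma mk_congr (j : ℤ) (P : MvPolynomial ℤ B) (hP : ∀ i ∈ P.vars, i ≤ j) :
    Ideal.Quotient.mk (carlitzIdeal B q Θ) P
      = Ideal.Quotient.mk (carlitzIdeal B q Θ) (emb j (σ q Θ j P)) := by
  have := MvPolynomial.hom_congr_vars
    (f₁ := Ideal.Quotient.mk (carlitzIdeal B q Θ))
    (f₂ := (Ideal.Quotient.mk (carlitzIdeal B q Θ)).comp ((emb j).comp (σ q Θ j)))
    (p₁ := P) (p₂ := P) ?_ ?_ rfl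
  · exact this
  · ext b
    simp [σ, emb]
  · intro i hi _
    have hij : i ≤ j := hP i hi
    have hσ : σ q Θ j (MvPolynomial.X i) = gpIter q Θ (j - i).toNat := by
      simp [σ, hij]
    rw [RingHom.comp_apply, RingHom.comp_apply, hσ]
    have := mk_ι_gpIter q Θ j (j - i).toNat
    have hji : (j - ((j - i).toNat : ℤ)) = i := by omega
    rwa [hji] at this

lemma F_injective (hq : 2 ≤ q) (i j : ℤ) (h : i ≤ j) :
    Function.Injective (F q Θ i j h) := by
  intro a b hab
  have hsub : (a - b).comp (gpIter q Θ (j - i).toNat) = 0 := by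
    rw [sub_comp]
    rw [F_apply, F_apply] at hab
    rw [hab, sub_self]
  rcases comp_eq_zero_iff.1 hsub with h0 | ⟨_, hC⟩
  · exact sub_eq_zero.1 h0
  · exfalso
    have := natDegree_gpIter_pos q Θ hq (j - i).toNat
    rw [hC, natDegree_C] at this
    exact Nat.lt_irrefl 0 this

lemma lof_injective (hq : 2 ≤ q) (i : ℤ) : Function.Injective (lof q Θ i) :=
  Ring.DirectLimit.of_injective (G := fun _ : ℤ => B[X]) (f' := fun i j h => F q Θ i j h)
    (fun i j hij => F_injective q Θ hq i j hij) i

lemma ker_le_span (hq : 2 ≤ q) : RingHom.ker (φ q Θ) ≤ carlitzIdeal B q Θ := by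
  intro P hP
  rw [RingHom.mem_ker] at hP
  obtain ⟨j, hj⟩ := P.vars.exists_le
  have hc := mk_congr q Θ j P hj
  have hmem : P - emb j (σ q Θ j P) ∈ carlitzIdeal B q Θ := Ideal.Quotient.eq.1 hc
  have h0 : φ q Θ (emb j (σ q Θ j P)) = 0 := by
    have := span_le_ker q Θ hmem
    rw [RingHom.mem_ker, map_sub, hP, zero_sub, neg_eq_zero] at this
    exact this
  have hlof : lof q Θ j (σ q Θ j P) = 0 := by
    rw [← RingHom.congr_fun (φ_ι q Θ j) (σ q Θ j P)]
    exact h0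
  have hσ0 : σ q Θ j P = 0 := by
    apply lof_injective q Θ hq j
    rw [hlof, map_zero]
  rw [← Ideal.Quotient.eq_zero_iff_mem, hc, hσ0, map_zero, map_zero]

lemma L_mul_eq_zero (hq : 2 ≤ q) (z w : L q Θ) (hzw : z * w = 0) : z = 0 ∨ w = 0 := by
  obtain ⟨i, x, hxz⟩ := Ring.DirectLimit.exists_of z
  obtain ⟨i', y, hyw⟩ := Ring.DirectLimit.exists_of w
  have hz : lof q Θ i x = z := hxz
  have hw : lof q Θ i' y = w := hyw
  set k := max i i' with hk
  have hik : i ≤ k := le_max_left _ _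
  have hi'k : i' ≤ k := le_max_right _ _
  set x' := F q Θ i k hik x with hx'
  set y' := F q Θ i' k hi'k y with hy'
  have hx : lof q Θ k x' = lof q Θ i x := lof_f q Θ hik x
  have hy : lof q Θ k y' = lof q Θ i' y := lof_f q Θ hi'k y
  have hprod : lof q Θ k (x' * y') = 0 := by
    rw [map_mul, hx, hy, hz, hw]
    exact hzw
  have hzero : x' * y' = 0 := lof_injective q Θ hq k (by rw [hprod, map_zero])
  rcases mul_eq_zero.1 hzero with h0 | h0
  · left; rw [← hz, ← hx, h0, map_zero]
  · right; rw [← hw, ← hy, h0, map_zero]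

lemma L_one_ne_zero (hq : 2 ≤ q) : (1 : L q Θ) ≠ 0 := by
  intro h1
  have : lof q Θ 0 (1 : B[X]) = lof q Θ 0 (0 : B[X]) := by
    rw [map_one, map_zero, h1]
  exact one_ne_zero (lof_injective q Θ hq 0 this)

end CarlitzAux

/-- The ideal `𝒫` is prime; equivalently, the quotient ring is an integral domain. -/
theorem stmt_2 {B : Type*} [CommRing B] [IsDomain B]
    (p q e : ℕ) (hp : p.Prime) (he : 0 < e) (hq : q = p ^ e) (Θ : B) :
    (carlitzIdeal B q Θ).IsPrime := by
  have hq2 : 2 ≤ q := by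
    have h2p := hp.two_le
    have : p ≤ p ^ e := Nat.le_self_pow he.ne' p
    omega
  have hker : carlitzIdeal B q Θ = RingHom.ker (CarlitzAux.φ q Θ) :=
    le_antisymm (CarlitzAux.span_le_ker q Θ) (CarlitzAux.ker_le_span q Θ hq2)
  constructor
  · intro htop
    have h1 : (1 : MvPolynomial ℤ B) ∈ carlitzIdeal B q Θ := htop ▸ Submodule.mem_top
    rw [hker, RingHom.mem_ker, map_one] at h1
    exact CarlitzAux.L_one_ne_zero q Θ hq2 h1
  · intro a b hab
    rw [hker, RingHom.mem_ker, map_mul] at hab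
    rcases CarlitzAux.L_mul_eq_zero q Θ hq2 _ _ hab with h | h
    · left; rw [hker, RingHom.mem_ker]; exact h
    · right; rw [hker, RingHom.mem_ker]; exact h
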